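/- Let p > d, σ ≠ 0, b ∈ L^p(ℝ^d; ℝ^d), and v ∈ H¹(ℝ^d). Then |∫ v (b·∇v) dx| ≤ (σ²/2) ∫ |∇v|² dx + C (∫ v² dx) (∫ |b|^p dx)^{2/(p−d)}, where C depends only on d, p, σ. -/

import Mathlib

open MeasureTheory ENNReal NNReal RealInnerProductSpace

lemma aux_lintegral_ne_top {α : Type*} [MeasurableSpace α] [TopologicalSpace α]
    [OpensMeasurableSpace α] {μ : Measure α} [IsFiniteMeasureOnCompacts μ]
    {F : Type*} [NormedAddCommGroup F] {f : α → F} (hf : Continuous f)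
    (h2f : HasCompactSupport f) {a : ℝ} (ha : 0 < a) :
    ∫⁻ x, (‖f x‖₊ : ℝ≥0∞) ^ a ∂μ ≠ ∞ := by
  have hg : Continuous fun x => ‖f x‖ ^ a := hf.norm.rpow_const (fun x => Or.inr ha.le)
  have hgs : HasCompactSupport fun x => ‖f x‖ ^ a := by
    have h0 : (fun x => ‖f x‖ ^ a) = (fun t : F => ‖t‖ ^ a) ∘ f := rfl
    rw [h0]; exact h2f.comp_left (by simp [Real.zero_rpow ha.ne'])
  have hint : Integrable (fun x => ‖f x‖ ^ a) μ := hg.integrable_of_hasCompactSupport hgs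
  have hfin := hint.hasFiniteIntegral
  rw [hasFiniteIntegral_iff_ofReal
    (Filter.Eventually.of_forall fun x => Real.rpow_nonneg (norm_nonneg _) _)] at hfin
  have heq : ∀ x, ENNReal.ofReal (‖f x‖ ^ a) = (‖f x‖₊ : ℝ≥0∞) ^ a := by
    intro x
    rw [← enorm_eq_nnnorm, ← ofReal_norm, ← ENNReal.ofReal_rpow_of_nonneg (norm_nonneg _) ha.le]
  simp_rw [heq] at hfin
  exact hfin.ne

lemma aux_lyapunov {α : Type*} [MeasurableSpace α] {μ : Measure α} {f : α → ℝ≥0∞}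
    (hf : AEMeasurable f μ) {a c t : ℝ} (ha : 0 < a) (hc : 0 < c) (ht : 0 < t) (ht1 : t < 1) :
    ∫⁻ x, f x ^ (t * a + (1 - t) * c) ∂μ ≤
      (∫⁻ x, f x ^ a ∂μ) ^ t * (∫⁻ x, f x ^ c ∂μ) ^ (1 - t) := by
  have ht' : (0:ℝ) < 1 - t := by linarith
  have hconj : (1/t).HolderConjugate (1/(1-t)) := by
    rw [Real.holderConjugate_iff]; constructor
    · rw [one_div]; exact (one_lt_inv₀ ht).2 ht1
    · simp [one_div]
  have h1 := ENNReal.lintegral_mul_le_Lp_mul_Lq μ hconj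
    (hf.pow_const (t * a)) (hf.pow_const ((1 - t) * c))
  calc ∫⁻ x, f x ^ (t * a + (1 - t) * c) ∂μ
      = ∫⁻ x, ((fun x => f x ^ (t * a)) * fun x => f x ^ ((1 - t) * c)) x ∂μ := by
        congr 1; funext x
        simp only [Pi.mul_apply]
        rw [ENNReal.rpow_add_of_nonneg _ _ (by positivity) (by positivity)]
    _ ≤ (∫⁻ x, (f x ^ (t * a)) ^ (1/t) ∂μ) ^ (1/(1/t)) *
        (∫⁻ x, (f x ^ ((1 - t) * c)) ^ (1/(1-t)) ∂μ) ^ (1/(1/(1-t))) := h1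
    _ = (∫⁻ x, f x ^ a ∂μ) ^ t * (∫⁻ x, f x ^ c ∂μ) ^ (1 - t) := by
        have e1 : t * a * (1/t) = a := by field_simp
        have e2 : (1 - t) * c * (1/(1-t)) = c := by field_simp
        rw [one_div_one_div, one_div_one_div]
        simp_rw [← ENNReal.rpow_mul, e1, e2]

lemma aux_young {s r ε : ℝ} (hs : 1 < s) (hsr : 1/s + 1/r = 1) (hε : 0 < ε) :
    ∃ K : ℝ, 0 < K ∧ ∀ x y : ℝ, 0 ≤ x → 0 ≤ y → x * y ≤ ε * x ^ s + K * y ^ r := by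
  have hs0 : s ≠ 0 := by positivity
  have hconj : s.HolderConjugate r := Real.holderConjugate_iff.mpr ⟨hs, by rw [← one_div, ← one_div]; exact hsr⟩
  have hr : 0 < r := hconj.symm.left_pos
  set l : ℝ := (ε * s) ^ (1/s) with hl_def
  have hl : 0 < l := Real.rpow_pos_of_pos (by positivity) _
  refine ⟨l⁻¹ ^ r / r, by positivity, ?_⟩
  intro x y hx hy
  have hy2 := Real.young_inequality (l * x) (l⁻¹ * y) hconj
  have hls : l ^ s = ε * s := by
    rw [hl_def, ← Real.rpow_mul (by positivity), one_div_mul_cancel hs0, Real.rpow_one]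
  have e1 : l * x * (l⁻¹ * y) = x * y := by field_simp
  have e2 : |l * x| ^ s = (ε * s) * x ^ s := by
    rw [abs_of_nonneg (by positivity), Real.mul_rpow hl.le hx, hls]
  have e3 : |l⁻¹ * y| ^ r = l⁻¹ ^ r * y ^ r := by
    rw [abs_of_nonneg (by positivity), Real.mul_rpow (by positivity) hy]
  rw [e1, e2, e3] at hy2
  calc x * y ≤ ε * s * x ^ s / s + l⁻¹ ^ r * y ^ r / r := hy2
    _ = ε * x ^ s + l⁻¹ ^ r / r * y ^ r := by field_simp

lemma aux_cs {α : Type*} [MeasurableSpace α] {μ : Measure α} {f g : α → ℝ≥0∞}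
    (hf : AEMeasurable f μ) (hg : AEMeasurable g μ) :
    (∫⁻ x, f x * g x ∂μ) ^ (2:ℝ) ≤ (∫⁻ x, f x ^ (2:ℝ) ∂μ) * (∫⁻ x, g x ^ (2:ℝ) ∂μ) := by
  have hconj : (2:ℝ).HolderConjugate 2 := Real.holderConjugate_iff.mpr ⟨by norm_num, by norm_num⟩
  have h := ENNReal.lintegral_mul_le_Lp_mul_Lq μ hconj hf hg
  calc (∫⁻ x, f x * g x ∂μ) ^ (2:ℝ)
      ≤ ((∫⁻ x, f x ^ (2:ℝ) ∂μ) ^ (1/(2:ℝ)) * (∫⁻ x, g x ^ (2:ℝ) ∂μ) ^ (1/(2:ℝ))) ^ (2:ℝ) :=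
        ENNReal.rpow_le_rpow h (by norm_num)
    _ = (∫⁻ x, f x ^ (2:ℝ) ∂μ) * (∫⁻ x, g x ^ (2:ℝ) ∂μ) := by
        rw [ENNReal.mul_rpow_of_nonneg _ _ (by norm_num : (0:ℝ) ≤ 2), ← ENNReal.rpow_mul,
          ← ENNReal.rpow_mul]
        norm_num

lemma ladder2 (k : ℕ) (hk : 1 ≤ k) :
    ∃ C : ℝ≥0∞, C ≠ ∞ ∧ ∀ v : EuclideanSpace ℝ (Fin 2) → ℝ, ContDiff ℝ 1 v →
      HasCompactSupport v →
      (∫⁻ x, (‖v x‖₊ : ℝ≥0∞) ^ (2*(k:ℝ))) ≤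
        C * (∫⁻ x, (‖fderiv ℝ v x‖₊ : ℝ≥0∞) ^ (2:ℝ)) ^ ((k:ℝ) - 1) *
          (∫⁻ x, (‖v x‖₊ : ℝ≥0∞) ^ (2:ℝ)) := by
  induction k, hk using Nat.le_induction with
  | base =>
      refine ⟨1, one_ne_top, fun v hv h2v => ?_⟩
      norm_num
  | succ k hk ih =>
      obtain ⟨C, hC, hCle⟩ := ih
      set C2 : ℝ≥0 := MeasureTheory.eLpNormLESNormFDerivOneConst
        (μ := (volume : Measure (EuclideanSpace ℝ (Fin 2)))) ((2:ℝ≥0) : ℝ) with hC2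
      refine ⟨(C2 : ℝ≥0∞) ^ (2:ℝ) * ((k:ℝ≥0∞) + 1) ^ (2:ℝ) * C, ?_, ?_⟩
      · apply mul_ne_top; apply mul_ne_top
        · exact ENNReal.rpow_ne_top_of_nonneg (by norm_num) coe_ne_top
        · exact ENNReal.rpow_ne_top_of_nonneg (by norm_num)
            (by simp [ENNReal.add_eq_top, ENNReal.natCast_ne_top])
        · exact hC
      intro v hv h2v
      set G2 : ℝ≥0∞ := ∫⁻ x, (‖fderiv ℝ v x‖₊ : ℝ≥0∞) ^ (2:ℝ) with hG2
      set I2 : ℝ≥0∞ := ∫⁻ x, (‖v x‖₊ : ℝ≥0∞) ^ (2:ℝ) with hI2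
      set w : EuclideanSpace ℝ (Fin 2) → ℝ := fun x => v x ^ (k+1) with hw_def
      have hw : ContDiff ℝ 1 w := hv.pow (k+1)
      have h2w : HasCompactSupport w := by
        have : w = (fun t : ℝ => t ^ (k+1)) ∘ v := rfl
        rw [this]; exact h2v.comp_left (by simp)
      have hfd : ∀ x, fderiv ℝ w x = (((k:ℝ)+1) * v x ^ k) • fderiv ℝ v x := by
        intro x
        have h1 : HasDerivAt (fun t : ℝ => t ^ (k+1)) (((k:ℝ)+1) * v x ^ k) (v x) := by
          simpa using hasDerivAt_pow (k+1) (v x)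
        have h2 : HasFDerivAt v (fderiv ℝ v x) x := (hv.differentiable one_ne_zero x).hasFDerivAt
        exact (h1.comp_hasFDerivAt x h2).fderiv
      have hnn : ∀ x, (‖fderiv ℝ w x‖₊ : ℝ≥0∞) =
          ((k:ℝ≥0∞)+1) * ((‖v x‖₊ : ℝ≥0∞) ^ (k:ℝ) * (‖fderiv ℝ v x‖₊ : ℝ≥0∞)) := by
        intro x
        rw [hfd, nnnorm_smul, nnnorm_mul, nnnorm_pow]
        push_cast
        rw [ENNReal.rpow_natCast]
        have : ‖(k:ℝ)+1‖₊ = ((k:ℝ≥0)+1) := by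
          ext; simp [Real.nnnorm_of_nonneg (by positivity : (0:ℝ) ≤ (k:ℝ)+1)]
        rw [this]
        push_cast
        ring
      -- Sobolev inequality with p = 1, d = 2
      have hconj : ((Module.finrank ℝ (EuclideanSpace ℝ (Fin 2)) : ℝ≥0)).HolderConjugate 2 := by
        rw [finrank_euclideanSpace_fin]
        exact NNReal.holderConjugate_iff.mpr ⟨by norm_num, by rw [← NNReal.coe_inj]; push_cast; norm_num⟩
      have hS := MeasureTheory.eLpNorm_le_eLpNorm_fderiv_one
        (μ := (volume : Measure (EuclideanSpace ℝ (Fin 2)))) hw h2w hconj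
      -- convert LHS
      have hwint : ∀ x, (‖w x‖₊ : ℝ≥0∞) ^ (2:ℝ) = (‖v x‖₊ : ℝ≥0∞) ^ (2*((k:ℝ)+1)) := by
        intro x
        have e1 : (‖w x‖₊ : ℝ≥0∞) = (‖v x‖₊ : ℝ≥0∞) ^ (((k+1:ℕ)):ℝ) := by
          show ((‖v x ^ (k+1)‖₊ : ℝ≥0∞)) = _
          rw [nnnorm_pow, ENNReal.coe_pow, ENNReal.rpow_natCast]
        rw [e1, ← ENNReal.rpow_mul]
        congr 1
        push_cast
        ring
      have hlhs : eLpNorm w ((2:ℝ≥0) : ℝ≥0∞) volume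
          = (∫⁻ x, (‖v x‖₊ : ℝ≥0∞) ^ (2*((k:ℝ)+1))) ^ ((1:ℝ)/2) := by
        rw [eLpNorm_nnreal_eq_lintegral (by norm_num : (2:ℝ≥0) ≠ 0)]
        norm_num [enorm_eq_nnnorm, hwint]
      have hmv : AEMeasurable (fun x => (‖v x‖₊ : ℝ≥0∞) ^ (k:ℝ))
          (volume : Measure (EuclideanSpace ℝ (Fin 2))) :=
        ((ENNReal.continuous_coe.comp hv.continuous.nnnorm).measurable.aemeasurable).pow_const _
      have hmg : AEMeasurable (fun x => (‖fderiv ℝ v x‖₊ : ℝ≥0∞))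
          (volume : Measure (EuclideanSpace ℝ (Fin 2))) :=
        (ENNReal.continuous_coe.comp
          ((hv.continuous_fderiv one_ne_zero).nnnorm)).measurable.aemeasurable
      have hrhs : eLpNorm (fderiv ℝ w) 1 volume
          = ((k:ℝ≥0∞)+1) * ∫⁻ x, (‖v x‖₊ : ℝ≥0∞) ^ (k:ℝ) * (‖fderiv ℝ v x‖₊ : ℝ≥0∞) := by
        rw [eLpNorm_one_eq_lintegral_enorm]
        simp_rw [enorm_eq_nnnorm, hnn]
        rw [lintegral_const_mul' _ _ (by simp [ENNReal.add_eq_top, ENNReal.natCast_ne_top])]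
      -- squared Hölder
      have hcs : (∫⁻ x, (‖v x‖₊ : ℝ≥0∞) ^ (k:ℝ) * (‖fderiv ℝ v x‖₊ : ℝ≥0∞)) ^ (2:ℝ) ≤
          (∫⁻ x, (‖v x‖₊ : ℝ≥0∞) ^ (2*(k:ℝ))) * G2 := by
        have h := aux_cs hmv hmg
        have e : ∀ x, ((‖v x‖₊ : ℝ≥0∞) ^ (k:ℝ)) ^ (2:ℝ) = (‖v x‖₊ : ℝ≥0∞) ^ (2*(k:ℝ)) := by
          intro x; rw [← ENNReal.rpow_mul]; ring_nf
        simp_rw [e] at h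
        exact h
      -- chain
      have key : (∫⁻ x, (‖v x‖₊ : ℝ≥0∞) ^ (2*((k:ℝ)+1)))
          ≤ (C2 : ℝ≥0∞) ^ (2:ℝ) * ((k:ℝ≥0∞)+1) ^ (2:ℝ) *
            ((∫⁻ x, (‖v x‖₊ : ℝ≥0∞) ^ (2*(k:ℝ))) * G2) := by
        have h1 : (∫⁻ x, (‖v x‖₊ : ℝ≥0∞) ^ (2*((k:ℝ)+1)))
            = (eLpNorm w ((2:ℝ≥0) : ℝ≥0∞) volume) ^ (2:ℝ) := by
          rw [hlhs, ← ENNReal.rpow_mul]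
          norm_num
        rw [h1]
        calc (eLpNorm w ((2:ℝ≥0) : ℝ≥0∞) volume) ^ (2:ℝ)
            ≤ ((C2 : ℝ≥0∞) * eLpNorm (fderiv ℝ w) 1 volume) ^ (2:ℝ) := by
              apply ENNReal.rpow_le_rpow _ (by norm_num)
              exact_mod_cast hS
          _ = (C2 : ℝ≥0∞) ^ (2:ℝ) * ((k:ℝ≥0∞)+1) ^ (2:ℝ) *
              (∫⁻ x, (‖v x‖₊ : ℝ≥0∞) ^ (k:ℝ) * (‖fderiv ℝ v x‖₊ : ℝ≥0∞)) ^ (2:ℝ) := by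
              rw [hrhs, ENNReal.mul_rpow_of_nonneg _ _ (by norm_num : (0:ℝ) ≤ 2),
                ENNReal.mul_rpow_of_nonneg _ _ (by norm_num : (0:ℝ) ≤ 2)]
              ring
          _ ≤ (C2 : ℝ≥0∞) ^ (2:ℝ) * ((k:ℝ≥0∞)+1) ^ (2:ℝ) *
              ((∫⁻ x, (‖v x‖₊ : ℝ≥0∞) ^ (2*(k:ℝ))) * G2) := mul_le_mul_right hcs _
      have hk1 : (1:ℝ) ≤ (k:ℝ) := by exact_mod_cast hk
      have hfin : (∫⁻ x, (‖v x‖₊ : ℝ≥0∞) ^ (2*(((k+1:ℕ)):ℝ)))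
          ≤ (C2 : ℝ≥0∞) ^ (2:ℝ) * ((k:ℝ≥0∞)+1) ^ (2:ℝ) * C * G2 ^ (((k+1:ℕ):ℝ) - 1) * I2 := by
        have e2 : (2*(((k+1:ℕ)):ℝ)) = 2*((k:ℝ)+1) := by push_cast; ring
        rw [e2]
        calc (∫⁻ x, (‖v x‖₊ : ℝ≥0∞) ^ (2*((k:ℝ)+1)))
            ≤ (C2 : ℝ≥0∞) ^ (2:ℝ) * ((k:ℝ≥0∞)+1) ^ (2:ℝ) *
              ((∫⁻ x, (‖v x‖₊ : ℝ≥0∞) ^ (2*(k:ℝ))) * G2) := key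
          _ ≤ (C2 : ℝ≥0∞) ^ (2:ℝ) * ((k:ℝ≥0∞)+1) ^ (2:ℝ) *
              ((C * G2 ^ ((k:ℝ) - 1) * I2) * G2) :=
              mul_le_mul_right (mul_le_mul_left (hCle v hv h2v) _) _
          _ = (C2 : ℝ≥0∞) ^ (2:ℝ) * ((k:ℝ≥0∞)+1) ^ (2:ℝ) * C *
                (G2 ^ ((k:ℝ) - 1) * G2 ^ (1:ℝ)) * I2 := by
              rw [ENNReal.rpow_one]; ring
          _ = (C2 : ℝ≥0∞) ^ (2:ℝ) * ((k:ℝ≥0∞)+1) ^ (2:ℝ) * C * G2 ^ (((k+1:ℕ):ℝ) - 1) * I2 := by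
              rw [← ENNReal.rpow_add_of_nonneg _ _ (by linarith) (by norm_num)]
              congr 2
              push_cast
              ring
      exact hfin

lemma gn_d2 (p : ℝ) (hp : 2 < p) :
    ∃ C : ℝ≥0∞, C ≠ ∞ ∧ ∀ v : EuclideanSpace ℝ (Fin 2) → ℝ, ContDiff ℝ 1 v →
      HasCompactSupport v →
      (∫⁻ x, (‖v x‖₊ : ℝ≥0∞) ^ (2*p/(p-2))) ^ ((p-2)/(2*p)) ≤
        C * (∫⁻ x, (‖fderiv ℝ v x‖₊ : ℝ≥0∞) ^ (2:ℝ)) ^ (((2:ℕ):ℝ)/(2*p)) *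
          (∫⁻ x, (‖v x‖₊ : ℝ≥0∞) ^ (2:ℝ)) ^ ((p - (2:ℕ))/(2*p)) := by
  have hp0 : (0:ℝ) < p := by linarith
  have hp2' : p - 2 ≠ 0 := ne_of_gt (by linarith)
  set q : ℝ := 2*p/(p-2) with hq_def
  have hq2 : 2 < q := by
    rw [hq_def, lt_div_iff₀ (by linarith)]; linarith
  have hq0 : (0:ℝ) < q := by linarith
  have hq0' : q ≠ 0 := by positivity
  set K : ℕ := ⌊q/2⌋₊ + 1 with hK_def
  have hKq : q < 2*K := by
    have := Nat.lt_floor_add_one (q/2)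
    have h2 : q/2 < (K:ℝ) := by rw [hK_def]; push_cast; linarith
    linarith
  have hK1 : 1 ≤ K := by omega
  have hK2 : (2:ℝ) < 2*(K:ℝ) := by linarith
  obtain ⟨C, hC, hCle⟩ := ladder2 K hK1
  set t : ℝ := (2*(K:ℝ) - q)/(2*(K:ℝ) - 2) with ht_def
  have hden : (0:ℝ) < 2*(K:ℝ) - 2 := by linarith
  have ht : 0 < t := by apply div_pos <;> linarith
  have ht1 : t < 1 := by rw [ht_def, div_lt_one hden]; linarith
  have h1t : (0:ℝ) ≤ 1 - t := by linarith
  have hq_eq : q = t * 2 + (1 - t) * (2*(K:ℝ)) := by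
    have hKm1 : (K:ℝ) - 1 ≠ 0 := by linarith
    rw [ht_def]; field_simp; ring
  refine ⟨C ^ ((1-t)/q), ENNReal.rpow_ne_top_of_nonneg (by positivity) hC, ?_⟩
  intro v hv h2v
  set G2 : ℝ≥0∞ := ∫⁻ x, (‖fderiv ℝ v x‖₊ : ℝ≥0∞) ^ (2:ℝ) with hG2
  set I2 : ℝ≥0∞ := ∫⁻ x, (‖v x‖₊ : ℝ≥0∞) ^ (2:ℝ) with hI2
  set IK : ℝ≥0∞ := ∫⁻ x, (‖v x‖₊ : ℝ≥0∞) ^ (2*(K:ℝ)) with hIK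
  have hm : AEMeasurable (fun x => (‖v x‖₊ : ℝ≥0∞))
      (volume : Measure (EuclideanSpace ℝ (Fin 2))) :=
    (ENNReal.continuous_coe.comp hv.continuous.nnnorm).measurable.aemeasurable
  have hLy : (∫⁻ x, (‖v x‖₊ : ℝ≥0∞) ^ q) ≤ I2 ^ t * IK ^ (1-t) := by
    rw [hq_eq]
    exact aux_lyapunov hm (by norm_num) (by linarith) ht ht1
  have hLad : IK ≤ C * G2 ^ ((K:ℝ) - 1) * I2 := hCle v hv h2v
  have hexpq : (p-2)/(2*p) = 1/q := by rw [hq_def]; field_simp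
  have step : (∫⁻ x, (‖v x‖₊ : ℝ≥0∞) ^ q) ^ (1/q) ≤
      I2 ^ (t/q) * (C * G2 ^ ((K:ℝ) - 1) * I2) ^ ((1-t)/q) := by
    calc (∫⁻ x, (‖v x‖₊ : ℝ≥0∞) ^ q) ^ (1/q)
        ≤ (I2 ^ t * IK ^ (1-t)) ^ (1/q) := ENNReal.rpow_le_rpow hLy (by positivity)
      _ = I2 ^ (t/q) * (IK ^ (1-t)) ^ (1/q) := by
          rw [ENNReal.mul_rpow_of_nonneg _ _ (by positivity : (0:ℝ) ≤ 1/q), ← ENNReal.rpow_mul]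
          congr 2
          field_simp
      _ = I2 ^ (t/q) * IK ^ ((1-t)/q) := by
          rw [← ENNReal.rpow_mul]
          congr 2
          field_simp
      _ ≤ I2 ^ (t/q) * (C * G2 ^ ((K:ℝ) - 1) * I2) ^ ((1-t)/q) :=
          mul_le_mul_right (ENNReal.rpow_le_rpow hLad (by positivity)) _
  have hexpG : ((K:ℝ) - 1) * ((1-t)/q) = ((2:ℕ):ℝ)/(2*p) := by
    rw [ht_def, hq_def]
    have hKne : 2*(K:ℝ) - 2 ≠ 0 := by linarith
    have hKm1 : (K:ℝ) - 1 ≠ 0 := by linarith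
    field_simp
    ring
  have hexpI : t/q + (1-t)/q = (p - ((2:ℕ):ℝ))/(2*p) := by
    rw [hq_def]
    push_cast
    field_simp
    ring
  calc (∫⁻ x, (‖v x‖₊ : ℝ≥0∞) ^ q) ^ ((p-2)/(2*p))
      = (∫⁻ x, (‖v x‖₊ : ℝ≥0∞) ^ q) ^ (1/q) := by rw [hexpq]
    _ ≤ I2 ^ (t/q) * (C * G2 ^ ((K:ℝ) - 1) * I2) ^ ((1-t)/q) := step
    _ = C ^ ((1-t)/q) * G2 ^ (((2:ℕ):ℝ)/(2*p)) * I2 ^ ((p - ((2:ℕ):ℝ))/(2*p)) := by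
        have h1 : (0:ℝ) ≤ (1-t)/q := div_nonneg h1t hq0.le
        have h2 : (0:ℝ) ≤ t/q := div_nonneg ht.le hq0.le
        rw [ENNReal.mul_rpow_of_nonneg _ _ h1, ENNReal.mul_rpow_of_nonneg _ _ h1,
          ← ENNReal.rpow_mul, hexpG]
        rw [show I2 ^ (t/q) * (C ^ ((1-t)/q) * G2 ^ (((2:ℕ):ℝ)/(2*p)) * I2 ^ ((1-t)/q)) =
          C ^ ((1-t)/q) * G2 ^ (((2:ℕ):ℝ)/(2*p)) * (I2 ^ (t/q) * I2 ^ ((1-t)/q)) from by ring,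
          ← ENNReal.rpow_add_of_nonneg _ _ h2 h1, hexpI]

lemma gn_d3 (d : ℕ) (p : ℝ) (hd3 : 3 ≤ d) (hdp : (d:ℝ) < p) :
    ∃ C : ℝ≥0∞, C ≠ ∞ ∧ ∀ v : EuclideanSpace ℝ (Fin d) → ℝ, ContDiff ℝ 1 v →
      HasCompactSupport v →
      (∫⁻ x, (‖v x‖₊ : ℝ≥0∞) ^ (2*p/(p-2))) ^ ((p-2)/(2*p)) ≤
        C * (∫⁻ x, (‖fderiv ℝ v x‖₊ : ℝ≥0∞) ^ (2:ℝ)) ^ ((d:ℝ)/(2*p)) *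
          (∫⁻ x, (‖v x‖₊ : ℝ≥0∞) ^ (2:ℝ)) ^ ((p - d)/(2*p)) := by
  have hd3' : (3:ℝ) ≤ d := by exact_mod_cast hd3
  have hp2 : (2:ℝ) < p := by linarith
  have hd2 : (2:ℝ) < d := by linarith
  have hp0 : (0:ℝ) < p := by linarith
  have hq0 : (0:ℝ) < 2*p/(p-2) := by apply div_pos <;> linarith
  set q : ℝ := 2*p/(p-2) with hq_def
  set r : ℝ := 2*d/((d:ℝ)-2) with hr_def
  have hr0 : (0:ℝ) < r := by rw [hr_def]; apply div_pos <;> linarith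
  set r' : ℝ≥0 := Real.toNNReal r with hr'_def
  have hr'0 : r' ≠ 0 := by
    simp only [hr'_def, ne_eq, Real.toNNReal_eq_zero, not_le]; exact hr0
  have hcoe : (r' : ℝ) = r := Real.coe_toNNReal r hr0.le
  set C0 : ℝ≥0 := MeasureTheory.SNormLESNormFDerivOfEqConst (F := ℝ)
    (μ := (volume : Measure (EuclideanSpace ℝ (Fin d)))) (2 : ℝ≥0) with hC0
  set t : ℝ := (p-(d:ℝ))/(p-2) with ht_def
  have ht : 0 < t := by apply div_pos <;> linarith
  have ht1 : t < 1 := by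
    rw [ht_def, div_lt_one (by linarith)]; linarith
  have h1t : (0:ℝ) ≤ 1 - t := by linarith
  have hp2' : p - 2 ≠ 0 := by linarith
  have hd2' : (d:ℝ) - 2 ≠ 0 := by linarith
  have hd0' : (d:ℝ) ≠ 0 := by linarith
  have hp0' : p ≠ 0 := by linarith
  have hq0'' : q ≠ 0 := by positivity
  have hr0' : r ≠ 0 := by positivity
  have hrtq : (0:ℝ) ≤ r * (1 - t) / q := div_nonneg (mul_nonneg hr0.le h1t) hq0.le
  refine ⟨(C0 : ℝ≥0∞) ^ (r*(1-t)/q), ENNReal.rpow_ne_top_of_nonneg hrtq coe_ne_top, ?_⟩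
  intro v hv h2v
  have hfr : (0:ℝ) < Module.finrank ℝ (EuclideanSpace ℝ (Fin d)) := by
    rw [finrank_euclideanSpace_fin]; exact_mod_cast (by linarith : (0:ℝ) < d)
  have hp' : ((r' : ℝ))⁻¹ = ((2:ℝ≥0) : ℝ)⁻¹ - ((Module.finrank ℝ (EuclideanSpace ℝ (Fin d)) : ℝ))⁻¹ := by
    rw [hcoe, finrank_euclideanSpace_fin, hr_def]
    field_simp
    push_cast; ring
  have hS := MeasureTheory.eLpNorm_le_eLpNorm_fderiv_of_eq
    (μ := (volume : Measure (EuclideanSpace ℝ (Fin d)))) hv h2v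
    (p := (2:ℝ≥0)) (p' := r') (by norm_num)
    (by rw [finrank_euclideanSpace_fin]; omega) hp'
  -- convert eLpNorms to lintegrals
  set Ir : ℝ≥0∞ := ∫⁻ x, (‖v x‖₊ : ℝ≥0∞) ^ r with hIr
  set I2 : ℝ≥0∞ := ∫⁻ x, (‖v x‖₊ : ℝ≥0∞) ^ (2:ℝ) with hI2
  set G2 : ℝ≥0∞ := ∫⁻ x, (‖fderiv ℝ v x‖₊ : ℝ≥0∞) ^ (2:ℝ) with hG2
  have hSl : Ir ^ (1/r) ≤ (C0 : ℝ≥0∞) * G2 ^ ((1:ℝ)/2) := by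
    have e1 : eLpNorm v (r' : ℝ≥0∞) volume = Ir ^ (1/r) := by
      rw [eLpNorm_nnreal_eq_lintegral hr'0, hcoe]
      rfl
    have e2 : eLpNorm (fderiv ℝ v) ((2:ℝ≥0) : ℝ≥0∞) volume = G2 ^ ((1:ℝ)/2) := by
      rw [eLpNorm_nnreal_eq_lintegral (by norm_num : (2:ℝ≥0) ≠ 0), hG2]
      norm_num [enorm_eq_nnnorm]
    rw [← e1, ← e2]; exact hS
  have hm : AEMeasurable (fun x => (‖v x‖₊ : ℝ≥0∞)) (volume : Measure (EuclideanSpace ℝ (Fin d))) :=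
    (ENNReal.continuous_coe.comp hv.continuous.nnnorm).measurable.aemeasurable
  have hq_eq : q = t * 2 + (1 - t) * r := by
    rw [hq_def, ht_def, hr_def]
    field_simp [hp2', hd2']
    ring
  have hLy : (∫⁻ x, (‖v x‖₊ : ℝ≥0∞) ^ q) ≤ I2 ^ t * Ir ^ (1-t) := by
    rw [hq_eq]
    exact aux_lyapunov hm (by norm_num) hr0 ht ht1
  -- raise to power 1/q
  have hq0' : (0:ℝ) < 1/q := by positivity
  have step : (∫⁻ x, (‖v x‖₊ : ℝ≥0∞) ^ q) ^ (1/q) ≤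
      I2 ^ (t/q) * ((C0:ℝ≥0∞) * G2 ^ ((1:ℝ)/2)) ^ (r*(1-t)/q) := by
    calc (∫⁻ x, (‖v x‖₊ : ℝ≥0∞) ^ q) ^ (1/q)
        ≤ (I2 ^ t * Ir ^ (1-t)) ^ (1/q) := ENNReal.rpow_le_rpow hLy hq0'.le
      _ = I2 ^ (t/q) * (Ir ^ (1/r)) ^ (r*(1-t)/q) := by
          rw [ENNReal.mul_rpow_of_nonneg _ _ hq0'.le, ← ENNReal.rpow_mul, ← ENNReal.rpow_mul,
            ← ENNReal.rpow_mul]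
          congr 2
          · field_simp
          · field_simp [hr0', hq0'']
      _ ≤ I2 ^ (t/q) * ((C0:ℝ≥0∞) * G2 ^ ((1:ℝ)/2)) ^ (r*(1-t)/q) :=
          mul_le_mul_right (ENNReal.rpow_le_rpow hSl hrtq) _
  have hexpG : (1:ℝ)/2 * (r*(1-t)/q) = (d:ℝ)/(2*p) := by
    rw [hq_def, ht_def, hr_def]
    field_simp [hp2', hd2', hp0', hd0']
    ring
  have hexpI : t/q = (p - (d:ℝ))/(2*p) := by
    rw [hq_def, ht_def]
    field_simp [hp2', hp0']
  have hexpq : (p-2)/(2*p) = 1/q := by rw [hq_def]; field_simp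
  calc (∫⁻ x, (‖v x‖₊ : ℝ≥0∞) ^ q) ^ ((p-2)/(2*p))
      = (∫⁻ x, (‖v x‖₊ : ℝ≥0∞) ^ q) ^ (1/q) := by rw [hexpq]
    _ ≤ I2 ^ (t/q) * ((C0:ℝ≥0∞) * G2 ^ ((1:ℝ)/2)) ^ (r*(1-t)/q) := step
    _ = (C0:ℝ≥0∞) ^ (r*(1-t)/q) * G2 ^ ((d:ℝ)/(2*p)) * I2 ^ ((p - d)/(2*p)) := by
        rw [ENNReal.mul_rpow_of_nonneg _ _ hrtq, ← ENNReal.rpow_mul, hexpG, hexpI]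
        ring

lemma gn_d1 (p : ℝ) (hp : 2 < p) :
    ∃ C : ℝ≥0∞, C ≠ ∞ ∧ ∀ v : EuclideanSpace ℝ (Fin 1) → ℝ, ContDiff ℝ 1 v →
      HasCompactSupport v →
      (∫⁻ x, (‖v x‖₊ : ℝ≥0∞) ^ (2*p/(p-2))) ^ ((p-2)/(2*p)) ≤
        C * (∫⁻ x, (‖fderiv ℝ v x‖₊ : ℝ≥0∞) ^ (2:ℝ)) ^ (((1:ℕ):ℝ)/(2*p)) *
          (∫⁻ x, (‖v x‖₊ : ℝ≥0∞) ^ (2:ℝ)) ^ ((p - (1:ℕ))/(2*p)) := by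
  have hp0 : (0:ℝ) < p := by linarith
  have hp0' : p ≠ 0 := ne_of_gt hp0
  have hp2' : p - 2 ≠ 0 := ne_of_gt (by linarith)
  set q : ℝ := 2*p/(p-2) with hq_def
  have hq2 : 2 < q := by
    rw [hq_def, lt_div_iff₀ (by linarith)]; linarith
  have hq0 : (0:ℝ) < q := by linarith
  have hq0' : q ≠ 0 := ne_of_gt hq0
  refine ⟨(2:ℝ≥0∞) ^ ((1:ℝ)/p), ENNReal.rpow_ne_top_of_nonneg (by positivity) (by norm_num), ?_⟩
  intro v hv h2v
  set L : ℝ →L[ℝ] EuclideanSpace ℝ (Fin 1) :=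
    ((EuclideanSpace.equiv (Fin 1) ℝ).symm : (Fin 1 → ℝ) →L[ℝ] EuclideanSpace ℝ (Fin 1)).comp
      (ContinuousLinearMap.pi fun _ => ContinuousLinearMap.id ℝ ℝ) with hL_def
  have hLapp : ∀ t : ℝ, ∀ i : Fin 1, L t i = t := fun t i => rfl
  have hLπ : ∀ x : EuclideanSpace ℝ (Fin 1), L (x 0) = x := by
    intro x; ext i
    have : i = 0 := Subsingleton.elim i 0
    rw [this]; exact hLapp (x 0) 0
  have hLnorm : ∀ t : ℝ, ‖L t‖ = |t| := by
    intro t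
    rw [EuclideanSpace.norm_eq]
    simp [hLapp, Real.sqrt_sq_eq_abs]
  have hπ : MeasurePreserving (fun x : EuclideanSpace ℝ (Fin 1) => x 0) volume volume := by
    have h1 := EuclideanSpace.volume_preserving_symm_measurableEquiv_toLp (Fin 1)
    have h2 := volume_preserving_funUnique (Fin 1) ℝ
    exact h2.comp h1
  set g : ℝ → ℝ := fun t => v (L t) with hg_def
  have hg : ContDiff ℝ 1 g := hv.comp (L.contDiff)
  have h2g : HasCompactSupport g := by
    rw [hasCompactSupport_def]
    apply IsCompact.of_isClosed_subset
      ((h2v.isCompact).image ((EuclideanSpace.proj (0 : Fin 1)).continuous)) isClosed_closure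
    apply closure_minimal _ (h2v.isCompact.image ((EuclideanSpace.proj (0 : Fin 1)).continuous)).isClosed
    intro t ht
    have hvL : v (L t) ≠ 0 := ht
    exact ⟨L t, subset_closure hvL, hLapp t 0⟩
  have hgd : ∀ t, HasDerivAt g (fderiv ℝ v (L t) (L 1)) t := by
    intro t
    have h1 : HasFDerivAt v (fderiv ℝ v (L t)) (L t) := (hv.differentiable one_ne_zero (L t)).hasFDerivAt
    have h2 : HasFDerivAt (fun s : ℝ => L s) L t := L.hasFDerivAt
    have h3 := (h1.comp t h2).hasDerivAt
    exact h3
  have hderiv_bound : ∀ t, (‖deriv g t‖₊ : ℝ≥0∞) ≤ (‖fderiv ℝ v (L t)‖₊ : ℝ≥0∞) := by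
    intro t
    rw [(hgd t).deriv]
    have h1 : ‖fderiv ℝ v (L t) (L 1)‖ ≤ ‖fderiv ℝ v (L t)‖ * ‖L 1‖ :=
      (fderiv ℝ v (L t)).le_opNorm (L 1)
    have h2 : ‖L 1‖ = 1 := by rw [hLnorm]; norm_num
    rw [h2, mul_one] at h1
    exact_mod_cast (by exact_mod_cast h1 : ‖fderiv ℝ v (L t) (L 1)‖₊ ≤ ‖fderiv ℝ v (L t)‖₊)
  set I2 : ℝ≥0∞ := ∫⁻ x, (‖v x‖₊ : ℝ≥0∞) ^ (2:ℝ) with hI2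
  set G2 : ℝ≥0∞ := ∫⁻ x, (‖fderiv ℝ v x‖₊ : ℝ≥0∞) ^ (2:ℝ) with hG2
  have hI2fin : I2 ≠ ∞ := aux_lintegral_ne_top hv.continuous h2v two_pos
  have hG2fin : G2 ≠ ∞ :=
    aux_lintegral_ne_top (hv.continuous_fderiv one_ne_zero) (h2v.fderiv ℝ) two_pos
  have hI2ℝ : ∫⁻ t : ℝ, (‖g t‖₊ : ℝ≥0∞) ^ (2:ℝ) = I2 := by
    rw [hI2, ← hπ.lintegral_comp]
    · congr 1; funext x
      rw [hg_def]
      simp only [hLπ]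
    · exact ((ENNReal.continuous_rpow_const.comp
        (ENNReal.continuous_coe.comp hg.continuous.nnnorm)).measurable)
  have hG2ℝ : ∫⁻ t : ℝ, (‖deriv g t‖₊ : ℝ≥0∞) ^ (2:ℝ) ≤ G2 := by
    have h1 : ∫⁻ t : ℝ, (‖deriv g t‖₊ : ℝ≥0∞) ^ (2:ℝ) ≤
        ∫⁻ t : ℝ, (‖fderiv ℝ v (L t)‖₊ : ℝ≥0∞) ^ (2:ℝ) :=
      lintegral_mono fun t => ENNReal.rpow_le_rpow (hderiv_bound t) (by norm_num)
    have h2 : ∫⁻ t : ℝ, (‖fderiv ℝ v (L t)‖₊ : ℝ≥0∞) ^ (2:ℝ) = G2 := by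
      rw [hG2, ← hπ.lintegral_comp]
      · congr 1; funext x
        simp only [hLπ]
      · exact ((ENNReal.continuous_rpow_const.comp
          (ENNReal.continuous_coe.comp
            (((hv.continuous_fderiv one_ne_zero).comp L.continuous).nnnorm))).measurable)
    rw [h2] at h1; exact h1
  set M : ℝ≥0∞ := 2 * I2 ^ ((1:ℝ)/2) * G2 ^ ((1:ℝ)/2) with hM
  have hMfin : M ≠ ∞ := by
    rw [hM]
    apply mul_ne_top; apply mul_ne_top
    · norm_num
    · exact ENNReal.rpow_ne_top_of_nonneg (by norm_num) hI2fin
    · exact ENNReal.rpow_ne_top_of_nonneg (by norm_num) hG2fin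
  have hsup : ∀ x, (‖v x‖₊ : ℝ≥0∞) ^ (2:ℝ) ≤ M := by
    intro x
    set f : ℝ → ℝ := fun t => g t ^ 2 with hf_def
    have hf : ContDiff ℝ 1 f := hg.pow 2
    have h2f : HasCompactSupport f := by
      have : f = (fun s : ℝ => s ^ 2) ∘ g := rfl
      rw [this]; exact h2g.comp_left (by simp)
    have hfder : ∀ t, deriv f t = 2 * g t * deriv g t := by
      intro t
      have h1 : HasDerivAt g (deriv g t) t := ((hg.differentiable one_ne_zero) t).hasDerivAt
      have h2 := h1.pow 2
      show deriv (g ^ 2) t = 2 * g t * deriv g t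
      simpa [mul_comm, mul_assoc] using h2.deriv
    have key := HasCompactSupport.enorm_le_lintegral_Ici_deriv hf h2f (x 0)
    have e2 : (‖v x‖₊ : ℝ≥0∞) ^ (2:ℝ) = (‖f (x 0)‖₊ : ℝ≥0∞) := by
      have e1 : f (x 0) = v x ^ 2 := by rw [hf_def, hg_def]; simp only [hLπ]
      rw [e1, nnnorm_pow, ENNReal.coe_pow, ← ENNReal.rpow_natCast]
      norm_num
    rw [e2]
    have hconj : (2:ℝ).HolderConjugate 2 := Real.holderConjugate_iff.mpr ⟨by norm_num, by norm_num⟩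
    have hmg : AEMeasurable (fun t => (‖g t‖₊ : ℝ≥0∞)) (volume : Measure ℝ) :=
      (ENNReal.continuous_coe.comp hg.continuous.nnnorm).measurable.aemeasurable
    have hmg' : AEMeasurable (fun t => (‖deriv g t‖₊ : ℝ≥0∞)) (volume : Measure ℝ) :=
      (ENNReal.continuous_coe.comp (hg.continuous_deriv le_rfl).nnnorm).measurable.aemeasurable
    calc (‖f (x 0)‖₊ : ℝ≥0∞) ≤ ∫⁻ y in Set.Iic (x 0), ‖deriv f y‖₊ := key
      _ ≤ ∫⁻ y, (‖deriv f y‖₊ : ℝ≥0∞) := setLIntegral_le_lintegral _ _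
      _ = ∫⁻ y, 2 * ((‖g y‖₊ : ℝ≥0∞) * (‖deriv g y‖₊ : ℝ≥0∞)) := by
          congr 1; funext y
          rw [hfder y, nnnorm_mul, nnnorm_mul]
          push_cast
          have : (‖(2:ℝ)‖₊ : ℝ≥0∞) = 2 := by
            simp [Real.nnnorm_of_nonneg (by norm_num : (0:ℝ) ≤ 2)]
          rw [this]
          ring
      _ = 2 * ∫⁻ y, (‖g y‖₊ : ℝ≥0∞) * (‖deriv g y‖₊ : ℝ≥0∞) :=
          lintegral_const_mul' _ _ (by norm_num)
      _ ≤ 2 * ((∫⁻ y, (‖g y‖₊ : ℝ≥0∞) ^ (2:ℝ)) ^ ((1:ℝ)/2) *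
            (∫⁻ y, (‖deriv g y‖₊ : ℝ≥0∞) ^ (2:ℝ)) ^ ((1:ℝ)/2)) :=
          mul_le_mul_right (ENNReal.lintegral_mul_le_Lp_mul_Lq volume hconj hmg hmg') _
      _ ≤ 2 * (I2 ^ ((1:ℝ)/2) * G2 ^ ((1:ℝ)/2)) := by
          rw [hI2ℝ]
          exact mul_le_mul_right (mul_le_mul_right (ENNReal.rpow_le_rpow hG2ℝ (by norm_num)) _) _
      _ = M := by rw [hM]; ring
  -- combine
  have hIq : (∫⁻ x, (‖v x‖₊ : ℝ≥0∞) ^ q) ≤ M ^ ((q-2)/2) * I2 := by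
    have hstep : ∀ x, (‖v x‖₊ : ℝ≥0∞) ^ q ≤ M ^ ((q-2)/2) * (‖v x‖₊ : ℝ≥0∞) ^ (2:ℝ) := by
      intro x
      have e : (‖v x‖₊ : ℝ≥0∞) ^ q
          = ((‖v x‖₊ : ℝ≥0∞) ^ (2:ℝ)) ^ ((q-2)/2) * (‖v x‖₊ : ℝ≥0∞) ^ (2:ℝ) := by
        rw [← ENNReal.rpow_mul]
        have : (2:ℝ) * ((q-2)/2) = q - 2 := by field_simp
        rw [this]
        rw [← ENNReal.rpow_add_of_nonneg _ _ (by linarith) (by norm_num)]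
        congr 1
        ring
      rw [e]
      exact mul_le_mul_left (ENNReal.rpow_le_rpow (hsup x) (div_nonneg (by linarith) (by norm_num))) _
    calc (∫⁻ x, (‖v x‖₊ : ℝ≥0∞) ^ q) ≤ ∫⁻ x, M ^ ((q-2)/2) * (‖v x‖₊ : ℝ≥0∞) ^ (2:ℝ) :=
          lintegral_mono hstep
      _ = M ^ ((q-2)/2) * I2 :=
          lintegral_const_mul' _ _ (ENNReal.rpow_ne_top_of_nonneg (div_nonneg (by linarith) (by norm_num)) hMfin)
  have hexp1 : (q-2)/2 * (1/q) = 1/p := by rw [hq_def]; field_simp; ring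
  have hexpq : (p-2)/(2*p) = 1/q := by rw [hq_def]; field_simp
  have hfinal : (∫⁻ x, (‖v x‖₊ : ℝ≥0∞) ^ q) ^ ((p-2)/(2*p)) ≤
      (2:ℝ≥0∞) ^ ((1:ℝ)/p) * G2 ^ ((1:ℝ)/(2*p)) * I2 ^ ((p-1)/(2*p)) := by
    rw [hexpq]
    calc (∫⁻ x, (‖v x‖₊ : ℝ≥0∞) ^ q) ^ (1/q)
        ≤ (M ^ ((q-2)/2) * I2) ^ (1/q) := ENNReal.rpow_le_rpow hIq (by positivity : (0:ℝ) ≤ 1/q)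
      _ = M ^ ((1:ℝ)/p) * I2 ^ (1/q) := by
          rw [ENNReal.mul_rpow_of_nonneg _ _ (by positivity : (0:ℝ) ≤ 1/q), ← ENNReal.rpow_mul,
            hexp1]
      _ = (2:ℝ≥0∞) ^ ((1:ℝ)/p) * G2 ^ ((1:ℝ)/(2*p)) * (I2 ^ ((1:ℝ)/(2*p)) * I2 ^ (1/q)) := by
          rw [hM, ENNReal.mul_rpow_of_nonneg _ _ (by positivity : (0:ℝ) ≤ 1/p),
            ENNReal.mul_rpow_of_nonneg _ _ (by positivity : (0:ℝ) ≤ 1/p),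
            ← ENNReal.rpow_mul, ← ENNReal.rpow_mul]
          have e1 : (1:ℝ)/2 * (1/p) = 1/(2*p) := by field_simp
          rw [e1]
          ring
      _ = (2:ℝ≥0∞) ^ ((1:ℝ)/p) * G2 ^ ((1:ℝ)/(2*p)) * I2 ^ ((p-1)/(2*p)) := by
          rw [← ENNReal.rpow_add_of_nonneg _ _ (by positivity : (0:ℝ) ≤ 1/(2*p))
            (by positivity : (0:ℝ) ≤ 1/q), ← hexpq]
          congr 2
          field_simp
          ring
  calc (∫⁻ x, (‖v x‖₊ : ℝ≥0∞) ^ q) ^ ((p-2)/(2*p))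
      ≤ (2:ℝ≥0∞) ^ ((1:ℝ)/p) * G2 ^ ((1:ℝ)/(2*p)) * I2 ^ ((p-1)/(2*p)) := hfinal
    _ = (2:ℝ≥0∞) ^ ((1:ℝ)/p) * G2 ^ (((1:ℕ):ℝ)/(2*p)) * I2 ^ ((p - (1:ℕ))/(2*p)) := by
        norm_num

lemma gn_core (d : ℕ) (p : ℝ) (hd : 1 ≤ d) (hdp : (d:ℝ) < p) (hp : 2 < p) :
    ∃ C : ℝ≥0∞, C ≠ ∞ ∧ ∀ v : EuclideanSpace ℝ (Fin d) → ℝ, ContDiff ℝ 1 v →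
      HasCompactSupport v →
      (∫⁻ x, (‖v x‖₊ : ℝ≥0∞) ^ (2*p/(p-2))) ^ ((p-2)/(2*p)) ≤
        C * (∫⁻ x, (‖fderiv ℝ v x‖₊ : ℝ≥0∞) ^ (2:ℝ)) ^ ((d:ℝ)/(2*p)) *
          (∫⁻ x, (‖v x‖₊ : ℝ≥0∞) ^ (2:ℝ)) ^ ((p - d)/(2*p)) := by
  rcases Nat.lt_or_ge d 3 with h3 | h3
  · interval_cases d
    · exact_mod_cast gn_d1 p hp
    · exact_mod_cast gn_d2 p hp
  · exact gn_d3 d p h3 hdp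

/-- `|∫ v (b·∇v)| ≤ (σ²/2) ∫ |∇v|² + C (∫ v²) (∫ |b|^p)^{2/(p-d)}` for `p > d`, `σ ≠ 0`. -/
theorem stmt4 (d : ℕ) (p σ : ℝ) (hd : 1 ≤ d) (hdp : (d : ℝ) < p) (hp : 2 < p) (hσ : σ ≠ 0) :
    ∃ C : ℝ, 0 < C ∧ ∀ (v : EuclideanSpace ℝ (Fin d) → ℝ)
      (b : EuclideanSpace ℝ (Fin d) → EuclideanSpace ℝ (Fin d)),
      ContDiff ℝ 1 v → HasCompactSupport v → Measurable b →
      Integrable (fun x => ‖b x‖ ^ p) →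
      |∫ x, v x * ⟪b x, gradient v x⟫| ≤
        σ ^ 2 / 2 * (∫ x, ‖gradient v x‖ ^ 2) +
          C * (∫ x, (v x) ^ 2) * (∫ x, ‖b x‖ ^ p) ^ (2 / (p - (d : ℝ))) := by
  have hp0 : (0:ℝ) < p := by linarith
  have hp0' : p ≠ 0 := by linarith
  have hd0 : (0:ℝ) < d := by exact_mod_cast Nat.pos_of_ne_zero (by omega)
  have hpd : (0:ℝ) < p - d := by linarith
  have hp2 : (0:ℝ) < p - 2 := by linarith
  have hσ2 : (0:ℝ) < σ^2/2 := by positivity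
  obtain ⟨Cgn, hCgnfin, hCgn⟩ := gn_core d p hd hdp hp
  -- Young's inequality with exponents s = 2p/(p+d), r = 2p/(p-d)
  set s : ℝ := 2*p/(p+(d:ℝ)) with hs_def
  set r : ℝ := 2*p/(p-(d:ℝ)) with hr_def
  have hs1 : 1 < s := by rw [hs_def, lt_div_iff₀ (by linarith)]; linarith
  have hsr : 1/s + 1/r = 1 := by rw [hs_def, hr_def]; field_simp; ring
  obtain ⟨K, hK, hKle⟩ := aux_young hs1 hsr hσ2
  set CgnR : ℝ := Cgn.toReal with hCgnR
  have hCgnR0 : 0 ≤ CgnR := ENNReal.toReal_nonneg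
  refine ⟨K * CgnR ^ r + 1, by positivity, ?_⟩
  intro v b hv h2v hb hbint
  set G2 : ℝ≥0∞ := ∫⁻ x, (‖fderiv ℝ v x‖₊ : ℝ≥0∞) ^ (2:ℝ) with hG2
  set I2 : ℝ≥0∞ := ∫⁻ x, (‖v x‖₊ : ℝ≥0∞) ^ (2:ℝ) with hI2
  set Iq : ℝ≥0∞ := ∫⁻ x, (‖v x‖₊ : ℝ≥0∞) ^ (2*p/(p-2)) with hIq
  set Bp : ℝ≥0∞ := ∫⁻ x, (‖b x‖₊ : ℝ≥0∞) ^ p with hBp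
  have hG2fin : G2 ≠ ∞ :=
    aux_lintegral_ne_top (hv.continuous_fderiv one_ne_zero) (h2v.fderiv ℝ) two_pos
  have hI2fin : I2 ≠ ∞ := aux_lintegral_ne_top hv.continuous h2v two_pos
  have hBpfin : Bp ≠ ∞ := by
    have h1 := hbint.hasFiniteIntegral
    rw [hasFiniteIntegral_iff_ofReal
      (Filter.Eventually.of_forall fun x => Real.rpow_nonneg (norm_nonneg _) _)] at h1
    have heq : ∀ x, ENNReal.ofReal (‖b x‖ ^ p) = (‖b x‖₊ : ℝ≥0∞) ^ p := by
      intro x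
      rw [← enorm_eq_nnnorm, ← ofReal_norm, ← ENNReal.ofReal_rpow_of_nonneg (norm_nonneg _) hp0.le]
    simp_rw [heq] at h1
    exact h1.ne
  -- pointwise norm bound
  have hgradnorm : ∀ x, ‖gradient v x‖ = ‖fderiv ℝ v x‖ := fun x =>
    LinearIsometryEquiv.norm_map (InnerProductSpace.toDual ℝ _).symm _
  have hpt : ∀ x, (‖v x * ⟪b x, gradient v x⟫‖₊ : ℝ≥0∞) ≤
      ((‖v x‖₊ : ℝ≥0∞) * (‖b x‖₊ : ℝ≥0∞)) * (‖fderiv ℝ v x‖₊ : ℝ≥0∞) := by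
    intro x
    have h1 : ‖v x * ⟪b x, gradient v x⟫‖ ≤ (‖v x‖ * ‖b x‖) * ‖fderiv ℝ v x‖ := by
      rw [norm_mul]
      have h2 : ‖⟪b x, gradient v x⟫‖ ≤ ‖b x‖ * ‖fderiv ℝ v x‖ := by
        rw [← hgradnorm x]
        exact norm_inner_le_norm _ _
      calc ‖v x‖ * ‖⟪b x, gradient v x⟫‖ ≤ ‖v x‖ * (‖b x‖ * ‖fderiv ℝ v x‖) :=
            mul_le_mul_of_nonneg_left h2 (norm_nonneg _)
        _ = (‖v x‖ * ‖b x‖) * ‖fderiv ℝ v x‖ := by ring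
    rw [← ENNReal.coe_mul, ← ENNReal.coe_mul, ENNReal.coe_le_coe]
    have h3 : ‖v x * ⟪b x, gradient v x⟫‖₊ ≤ (‖v x‖₊ * ‖b x‖₊) * ‖fderiv ℝ v x‖₊ := by
      rw [← NNReal.coe_le_coe]
      push_cast
      exact h1
    exact h3
  -- measurability
  have hmv : AEMeasurable (fun x => (‖v x‖₊ : ℝ≥0∞))
      (volume : Measure (EuclideanSpace ℝ (Fin d))) :=
    (ENNReal.continuous_coe.comp hv.continuous.nnnorm).measurable.aemeasurable
  have hmb : AEMeasurable (fun x => (‖b x‖₊ : ℝ≥0∞))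
      (volume : Measure (EuclideanSpace ℝ (Fin d))) :=
    hb.nnnorm.coe_nnreal_ennreal.aemeasurable
  have hmg : AEMeasurable (fun x => (‖fderiv ℝ v x‖₊ : ℝ≥0∞))
      (volume : Measure (EuclideanSpace ℝ (Fin d))) :=
    (ENNReal.continuous_coe.comp (hv.continuous_fderiv one_ne_zero).nnnorm).measurable.aemeasurable
  -- Hölder 1 : conj (2,2)
  have hconj22 : (2:ℝ).HolderConjugate 2 := Real.holderConjugate_iff.mpr ⟨by norm_num, by norm_num⟩
  have hH1 : ∫⁻ x, ((‖v x‖₊ : ℝ≥0∞) * (‖b x‖₊ : ℝ≥0∞)) * (‖fderiv ℝ v x‖₊ : ℝ≥0∞) ≤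
      (∫⁻ x, ((‖v x‖₊ : ℝ≥0∞) * (‖b x‖₊ : ℝ≥0∞)) ^ (2:ℝ)) ^ ((1:ℝ)/2) * G2 ^ ((1:ℝ)/2) :=
    ENNReal.lintegral_mul_le_Lp_mul_Lq volume hconj22 (hmv.mul hmb) hmg
  -- Hölder 2 : conj (p/(p-2), p/2)
  have hconjp : (p/(p-2)).HolderConjugate (p/2) := by
    rw [Real.holderConjugate_iff]; constructor
    · rw [lt_div_iff₀ hp2]; linarith
    · rw [inv_div, inv_div]; field_simp; ring
  have hH2 : ∫⁻ x, ((‖v x‖₊ : ℝ≥0∞) ^ (2:ℝ)) * ((‖b x‖₊ : ℝ≥0∞) ^ (2:ℝ)) ≤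
      Iq ^ ((p-2)/p) * Bp ^ (2/p) := by
    have h := ENNReal.lintegral_mul_le_Lp_mul_Lq volume hconjp
      (hmv.pow_const (2:ℝ)) (hmb.pow_const (2:ℝ))
    have e1 : ∀ x, ((‖v x‖₊ : ℝ≥0∞) ^ (2:ℝ)) ^ (p/(p-2)) = (‖v x‖₊ : ℝ≥0∞) ^ (2*p/(p-2)) := by
      intro x; rw [← ENNReal.rpow_mul]; congr 1; field_simp
    have e2 : ∀ x, ((‖b x‖₊ : ℝ≥0∞) ^ (2:ℝ)) ^ (p/2) = (‖b x‖₊ : ℝ≥0∞) ^ p := by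
      intro x; rw [← ENNReal.rpow_mul]; congr 1; field_simp
    simp_rw [e1, e2] at h
    have e3 : 1/(p/(p-2)) = (p-2)/p := by field_simp
    have e4 : 1/(p/2) = 2/p := by field_simp
    rw [e3, e4] at h
    exact h
  -- combine into the main lintegral bound
  have hmain : ∫⁻ x, (‖v x * ⟪b x, gradient v x⟫‖₊ : ℝ≥0∞) ≤
      Cgn * G2 ^ ((p+(d:ℝ))/(2*p)) * I2 ^ ((p-(d:ℝ))/(2*p)) * Bp ^ (1/p) := by
    calc ∫⁻ x, (‖v x * ⟪b x, gradient v x⟫‖₊ : ℝ≥0∞)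
        ≤ ∫⁻ x, ((‖v x‖₊ : ℝ≥0∞) * (‖b x‖₊ : ℝ≥0∞)) * (‖fderiv ℝ v x‖₊ : ℝ≥0∞) :=
          lintegral_mono hpt
      _ ≤ (∫⁻ x, ((‖v x‖₊ : ℝ≥0∞) * (‖b x‖₊ : ℝ≥0∞)) ^ (2:ℝ)) ^ ((1:ℝ)/2) * G2 ^ ((1:ℝ)/2) := hH1
      _ = (∫⁻ x, ((‖v x‖₊ : ℝ≥0∞) ^ (2:ℝ)) * ((‖b x‖₊ : ℝ≥0∞) ^ (2:ℝ))) ^ ((1:ℝ)/2) *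
            G2 ^ ((1:ℝ)/2) := by
          simp_rw [ENNReal.mul_rpow_of_nonneg _ _ (by norm_num : (0:ℝ) ≤ 2)]
      _ ≤ (Iq ^ ((p-2)/p) * Bp ^ (2/p)) ^ ((1:ℝ)/2) * G2 ^ ((1:ℝ)/2) :=
          mul_le_mul_left (ENNReal.rpow_le_rpow hH2 (by norm_num)) _
      _ = Iq ^ ((p-2)/(2*p)) * Bp ^ (1/p) * G2 ^ ((1:ℝ)/2) := by
          rw [ENNReal.mul_rpow_of_nonneg _ _ (by norm_num : (0:ℝ) ≤ 1/2), ← ENNReal.rpow_mul,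
            ← ENNReal.rpow_mul,
            show (p-2)/p * (1/2) = (p-2)/(2*p) from by rw [mul_one_div, div_div, mul_comm p 2],
            show (2/p) * (1/2) = 1/p from by
              rw [mul_one_div, div_div, mul_comm p 2, ← div_div]; norm_num]
      _ ≤ (Cgn * G2 ^ ((d:ℝ)/(2*p)) * I2 ^ ((p-(d:ℝ))/(2*p))) * Bp ^ (1/p) * G2 ^ ((1:ℝ)/2) := by
          exact mul_le_mul_left (mul_le_mul_left (hCgn v hv h2v) _) _
      _ = Cgn * (G2 ^ ((d:ℝ)/(2*p)) * G2 ^ ((1:ℝ)/2)) * I2 ^ ((p-(d:ℝ))/(2*p)) * Bp ^ (1/p) := by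
          ring
      _ = Cgn * G2 ^ ((p+(d:ℝ))/(2*p)) * I2 ^ ((p-(d:ℝ))/(2*p)) * Bp ^ (1/p) := by
          rw [← ENNReal.rpow_add_of_nonneg _ _ (by positivity) (by norm_num),
            show (d:ℝ)/(2*p) + 1/2 = (p+(d:ℝ))/(2*p) from by field_simp [hp0']; ring]
  -- real-valued quantities
  set gR : ℝ := G2.toReal with hgR
  set wR : ℝ := I2.toReal with hwR
  set βR : ℝ := Bp.toReal with hβR
  have hgR0 : 0 ≤ gR := ENNReal.toReal_nonneg
  have hwR0 : 0 ≤ wR := ENNReal.toReal_nonneg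
  have hβR0 : 0 ≤ βR := ENNReal.toReal_nonneg
  -- identify the real integrals
  have hgradcont : Continuous (fun x => gradient v x) :=
    (InnerProductSpace.toDual ℝ _).symm.continuous.comp (hv.continuous_fderiv one_ne_zero)
  have hIg : ∫ x, ‖gradient v x‖ ^ 2 = gR := by
    rw [integral_eq_lintegral_of_nonneg_ae (f := fun x => ‖gradient v x‖ ^ 2) (Filter.Eventually.of_forall fun x => by positivity)
      (hgradcont.norm.pow 2).aestronglyMeasurable]
    congr 1
    congr 1
    funext x
    rw [hgradnorm x, ← Real.rpow_natCast ‖fderiv ℝ v x‖ 2,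
      ← ENNReal.ofReal_rpow_of_nonneg (norm_nonneg _) (by positivity),
      ofReal_norm, enorm_eq_nnnorm]
    norm_num
  have hIv : ∫ x, (v x) ^ 2 = wR := by
    rw [integral_eq_lintegral_of_nonneg_ae (f := fun x => (v x) ^ 2) (Filter.Eventually.of_forall fun x => by positivity)
      ((hv.continuous.pow 2).aestronglyMeasurable)]
    congr 1
    congr 1
    funext x
    rw [show (v x)^2 = ‖v x‖^2 from by rw [Real.norm_eq_abs, sq_abs],
      ← Real.rpow_natCast ‖v x‖ 2,
      ← ENNReal.ofReal_rpow_of_nonneg (norm_nonneg _) (by positivity),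
      ofReal_norm, enorm_eq_nnnorm]
    norm_num
  have hIb : ∫ x, ‖b x‖ ^ p = βR := by
    rw [integral_eq_lintegral_of_nonneg_ae
      (Filter.Eventually.of_forall fun x => Real.rpow_nonneg (norm_nonneg _) _)
      hbint.aestronglyMeasurable]
    congr 1
    congr 1
    funext x
    rw [← ENNReal.ofReal_rpow_of_nonneg (norm_nonneg _) hp0.le, ofReal_norm, enorm_eq_nnnorm]
  -- pass to reals
  have habs : |∫ x, v x * ⟪b x, gradient v x⟫| ≤
      CgnR * gR ^ ((p+(d:ℝ))/(2*p)) * wR ^ ((p-(d:ℝ))/(2*p)) * βR ^ (1/p) := by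
    have h1 : |∫ x, v x * ⟪b x, gradient v x⟫| ≤
        (∫⁻ x, (‖v x * ⟪b x, gradient v x⟫‖₊ : ℝ≥0∞)).toReal := by
      calc |∫ x, v x * ⟪b x, gradient v x⟫|
          = ‖∫ x, v x * ⟪b x, gradient v x⟫‖ := (Real.norm_eq_abs _).symm
        _ ≤ (∫⁻ x, ENNReal.ofReal ‖v x * ⟪b x, gradient v x⟫‖).toReal :=
            norm_integral_le_lintegral_norm _
        _ = (∫⁻ x, (‖v x * ⟪b x, gradient v x⟫‖₊ : ℝ≥0∞)).toReal := by
            simp_rw [ofReal_norm, enorm_eq_nnnorm]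
    have hRHSfin : Cgn * G2 ^ ((p+(d:ℝ))/(2*p)) * I2 ^ ((p-(d:ℝ))/(2*p)) * Bp ^ (1/p) ≠ ∞ := by
      apply mul_ne_top
      apply mul_ne_top
      apply mul_ne_top
      · exact hCgnfin
      · exact ENNReal.rpow_ne_top_of_nonneg (by positivity) hG2fin
      · exact ENNReal.rpow_ne_top_of_nonneg (by positivity) hI2fin
      · exact ENNReal.rpow_ne_top_of_nonneg (by positivity) hBpfin
    have h2 := ENNReal.toReal_mono hRHSfin hmain
    rw [ENNReal.toReal_mul, ENNReal.toReal_mul, ENNReal.toReal_mul, ← ENNReal.toReal_rpow,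
      ← ENNReal.toReal_rpow, ← ENNReal.toReal_rpow, ← hgR, ← hwR, ← hβR, ← hCgnR] at h2
    exact le_trans h1 h2
  have hyoung := hKle (gR ^ ((p+(d:ℝ))/(2*p))) (CgnR * wR ^ ((p-(d:ℝ))/(2*p)) * βR ^ (1/p))
    (by positivity) (by positivity)
  have hx : (gR ^ ((p+(d:ℝ))/(2*p))) ^ s = gR := by
    rw [← Real.rpow_mul hgR0,
      show ((p+(d:ℝ))/(2*p)) * s = 1 from by
        rw [hs_def]; field_simp,
      Real.rpow_one]
  have hy : (CgnR * wR ^ ((p-(d:ℝ))/(2*p)) * βR ^ (1/p)) ^ r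
      = CgnR ^ r * (wR * βR ^ (2/(p-(d:ℝ)))) := by
    rw [Real.mul_rpow (by positivity) (by positivity),
      Real.mul_rpow (by positivity) (by positivity),
      ← Real.rpow_mul hwR0, ← Real.rpow_mul hβR0,
      show ((p-(d:ℝ))/(2*p)) * r = 1 from by
        rw [hr_def]; field_simp,
      show (1/p) * r = 2/(p-(d:ℝ)) from by
        rw [hr_def]; field_simp,
      Real.rpow_one, mul_assoc]
  have hfin : |∫ x, v x * ⟪b x, gradient v x⟫| ≤
      σ^2/2 * gR + (K * CgnR ^ r + 1) * wR * βR ^ (2/(p-(d:ℝ))) := by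
    calc |∫ x, v x * ⟪b x, gradient v x⟫|
        ≤ CgnR * gR ^ ((p+(d:ℝ))/(2*p)) * wR ^ ((p-(d:ℝ))/(2*p)) * βR ^ (1/p) := habs
      _ = (gR ^ ((p+(d:ℝ))/(2*p))) * (CgnR * wR ^ ((p-(d:ℝ))/(2*p)) * βR ^ (1/p)) := by ring
      _ ≤ σ^2/2 * (gR ^ ((p+(d:ℝ))/(2*p))) ^ s +
            K * (CgnR * wR ^ ((p-(d:ℝ))/(2*p)) * βR ^ (1/p)) ^ r := hyoung
      _ = σ^2/2 * gR + K * (CgnR ^ r * (wR * βR ^ (2/(p-(d:ℝ))))) := by rw [hx, hy]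
      _ ≤ σ^2/2 * gR + (K * CgnR ^ r + 1) * wR * βR ^ (2/(p-(d:ℝ))) := by
          have hterm : (0:ℝ) ≤ wR * βR ^ (2/(p-(d:ℝ))) := by positivity
          have : K * (CgnR ^ r * (wR * βR ^ (2/(p-(d:ℝ)))))
              = (K * CgnR ^ r) * (wR * βR ^ (2/(p-(d:ℝ)))) := by ring
          rw [this]
          have h3 : (K * CgnR ^ r) * (wR * βR ^ (2/(p-(d:ℝ))))
              ≤ (K * CgnR ^ r + 1) * (wR * βR ^ (2/(p-(d:ℝ)))) := by
            apply mul_le_mul_of_nonneg_right _ hterm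
            linarith
          linarith [h3, mul_assoc (K * CgnR ^ r + 1) wR (βR ^ (2/(p-(d:ℝ))))]
  rw [hIg, hIv, hIb]
  exact hfin
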